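/- Let h = h(t,x,v) satisfy at a fixed t the boundary conditions h(t,0,v) = k₀₀ h(t,0,−v) + k₁₀ h(t,1,v) for v > 0 and h(t,1,v) = k₀₁ h(t,0,v) + k₁₁ h(t,1,−v) for v < 0, with |v|h(t,x,·)² integrable for x ∈ {0,1}, and assume k₀₀ + k₀₁ = 1 and k₁₁ + k₁₀ = 1. Then −∫_ℝ (v/2)(h²(t,1,v) − h²(t,0,v)) dv ≤ −2k₀₀(1 − k₀₀)A − 2k₁₁(1 − k₁₁)B + 2|k₁₁(1 − k₀₀) + k₀₀(1 − k₁₁)|√(AB), where A = −∫_{−∞}^0 (v/2) h(t,0,v)² dv and B = ∫_0^∞ (v/2) h(t,1,v)² dv. -/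

import Mathlib

open MeasureTheory Real Set

/-- The global Maxwellian `M(v) = (2π)^{-1/2} e^{-v²/2}`. -/
noncomputable def Mw (v : ℝ) : ℝ := (Real.sqrt (2 * Real.pi))⁻¹ * Real.exp (-(v ^ 2) / 2)

/-- `√M`. -/
noncomputable def sM (v : ℝ) : ℝ := Real.sqrt (Mw v)

/-- Squared `L²` norm on `Ω = [0,1] × ℝ`: `‖g‖² = ∫₀¹ ∫_ℝ g² dv dx`. -/
noncomputable def nSq (g : ℝ → ℝ → ℝ) : ℝ := ∫ x in (0:ℝ)..1, ∫ v : ℝ, (g x v) ^ 2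

/-- Partial derivative in the spatial variable `x`. -/
noncomputable def pdx (g : ℝ → ℝ → ℝ) : ℝ → ℝ → ℝ := fun x v => deriv (fun y => g y v) x

/-- `‖g‖_V² = ‖g‖² + ‖∂ₓ g‖²`. -/
noncomputable def nVSq (g : ℝ → ℝ → ℝ) : ℝ := nSq g + nSq (pdx g)

/-- `‖g‖_ω² = ‖g‖² + ‖∂_v g‖² + ‖v g‖²`. -/
noncomputable def nOmSq (g : ℝ → ℝ → ℝ) : ℝ :=
  nSq g + nSq (fun x v => deriv (g x) v) + nSq (fun x v => v * g x v)

/-- The weighted projection `(Πg)(x,v) = (∫_ℝ g(x,w)√M(w) dw)√M(v)`. -/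
noncomputable def Proj (g : ℝ → ℝ → ℝ) : ℝ → ℝ → ℝ := fun x v => (∫ w : ℝ, g x w * sM w) * sM v

/-- Boundary functional `A(t) = −∫_{-∞}^0 (v/2) h(t,0,v)² dv`. -/
noncomputable def Abd (h : ℝ → ℝ → ℝ → ℝ) (t : ℝ) : ℝ := -∫ v in Iio (0:ℝ), (v / 2) * (h t 0 v) ^ 2

/-- Boundary functional `B(t) = ∫_0^∞ (v/2) h(t,1,v)² dv`. -/
noncomputable def Bbd (h : ℝ → ℝ → ℝ → ℝ) (t : ℝ) : ℝ := ∫ v in Ioi (0:ℝ), (v / 2) * (h t 1 v) ^ 2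

/-- Boundary functional `A_x(t) = −∫_{-∞}^0 (v/2) (∂ₓh)(t,0,v)² dv`. -/
noncomputable def Axbd (h : ℝ → ℝ → ℝ → ℝ) (t : ℝ) : ℝ :=
  -∫ v in Iio (0:ℝ), (v / 2) * (pdx (h t) 0 v) ^ 2

/-- Boundary functional `B_x(t) = ∫_0^∞ (v/2) (∂ₓh)(t,1,v)² dv`. -/
noncomputable def Bxbd (h : ℝ → ℝ → ℝ → ℝ) (t : ℝ) : ℝ :=
  ∫ v in Ioi (0:ℝ), (v / 2) * (pdx (h t) 1 v) ^ 2

/-- `C_B(t) = ((√A−√B)² + (√Aₓ−√Bₓ)²)/(2(√A+√B)(√Aₓ+√Bₓ))`. -/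
noncomputable def CB (h : ℝ → ℝ → ℝ → ℝ) (t : ℝ) : ℝ :=
  ((Real.sqrt (Abd h t) - Real.sqrt (Bbd h t)) ^ 2
      + (Real.sqrt (Axbd h t) - Real.sqrt (Bxbd h t)) ^ 2) /
    (2 * (Real.sqrt (Abd h t) + Real.sqrt (Bbd h t))
      * (Real.sqrt (Axbd h t) + Real.sqrt (Bxbd h t)))

/-- The macroscopic density `σ(t,x) = ∫_ℝ h √M dv`. -/
noncomputable def dens (h : ℝ → ℝ → ℝ → ℝ) (t x : ℝ) : ℝ := ∫ v : ℝ, h t x v * sM v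

/-- The macroscopic flux `u(t,x) = ∫_ℝ v h √M dv`. -/
noncomputable def flux (h : ℝ → ℝ → ℝ → ℝ) (t x : ℝ) : ℝ := ∫ v : ℝ, v * h t x v * sM v

/-- The weighted VFP equation `ε ∂ₜh + v ∂ₓh − (1/ε) L h = E (∂ᵥ − v/2) h` on
`[0,∞) × [0,1] × ℝ`, with `L h = (1/2)h − (v²/4)h + ∂ᵥ²h` in strong form. -/
def IsVFPSolution (ε : ℝ) (E : ℝ → ℝ → ℝ) (h : ℝ → ℝ → ℝ → ℝ) : Prop :=
  ∀ t ≥ (0:ℝ), ∀ x ∈ Icc (0:ℝ) 1, ∀ v : ℝ,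
    ε * deriv (fun s => h s x v) t + v * deriv (fun y => h t y v) x
        - (1 / ε) * ((1 / 2) * h t x v - (v ^ 2 / 4) * h t x v + deriv (deriv (h t x)) v)
      = E t x * (deriv (h t x) v - (v / 2) * h t x v)


section Stmt17Aux

open MeasureTheory Real Set

lemma stmt17_aux_meas (φ : ℝ → ℝ)
    (hφ : AEStronglyMeasurable (fun v : ℝ => |v| * φ v ^ 2) volume) :
    AEStronglyMeasurable (fun v : ℝ => v / 2 * φ v ^ 2) volume := by
  have heq : (fun v : ℝ => v / 2 * φ v ^ 2)
      = fun v : ℝ => (v / (2 * |v|)) * (|v| * φ v ^ 2) := by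
    funext v
    rcases eq_or_ne v 0 with rfl | hv
    · simp
    · have h1 : |v| ≠ 0 := abs_ne_zero.mpr hv
      field_simp
  rw [heq]
  exact ((measurable_id.div (measurable_abs.const_mul 2)).aestronglyMeasurable).mul hφ

lemma stmt17_aux_int (φ : ℝ → ℝ) (hφ : Integrable (fun v : ℝ => |v| * φ v ^ 2)) :
    Integrable (fun v : ℝ => v / 2 * φ v ^ 2) := by
  refine hφ.mono' (stmt17_aux_meas φ hφ.1) (Filter.Eventually.of_forall fun v => ?_)
  have h1 : (0:ℝ) ≤ φ v ^ 2 := sq_nonneg _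
  have h2 : |v / 2| = |v| / 2 := by rw [abs_div]; simp
  rw [Real.norm_eq_abs, abs_mul, abs_of_nonneg h1, h2]
  nlinarith [abs_nonneg v]

lemma stmt17_aux_flip (φ : ℝ → ℝ) :
    (∫ v in Iio (0:ℝ), v / 2 * φ v ^ 2) = -∫ v in Ioi (0:ℝ), v / 2 * φ (-v) ^ 2 := by
  have h0 : (∫ v in Iio (0:ℝ), v / 2 * φ v ^ 2) = ∫ v in Iic (0:ℝ), v / 2 * φ v ^ 2 :=
    setIntegral_congr_set Iio_ae_eq_Iic
  have h1 := integral_comp_neg_Iic (0:ℝ) (fun x : ℝ => -x / 2 * φ (-x) ^ 2)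
  simp only [neg_neg, neg_zero] at h1
  rw [h0, h1, ← integral_neg]
  exact setIntegral_congr_fun measurableSet_Ioi fun x _ => by ring

end Stmt17Aux

set_option maxHeartbeats 1000000 in
/-- boundary estimate for the zeroth-order boundary term:
`−∫ (v/2)(h²(t,1,v) − h²(t,0,v)) dv ≤ −2k₀₀(1−k₀₀)A − 2k₁₁(1−k₁₁)B`
`+ 2|k₁₁(1−k₀₀) + k₀₀(1−k₁₁)|√(AB)` under the feedback boundary conditions with
`k₀₀ + k₀₁ = 1` and `k₁₁ + k₁₀ = 1`. -/
theorem stmt17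
    (h : ℝ → ℝ → ℝ → ℝ) (k00 k01 k10 k11 t : ℝ)
    (hint0 : Integrable (fun v : ℝ => |v| * (h t 0 v) ^ 2))
    (hint1 : Integrable (fun v : ℝ => |v| * (h t 1 v) ^ 2))
    (hbc0 : ∀ v > (0:ℝ), h t 0 v = k00 * h t 0 (-v) + k10 * h t 1 v)
    (hbc1 : ∀ v < (0:ℝ), h t 1 v = k01 * h t 0 v + k11 * h t 1 (-v))
    (hk1 : k00 + k01 = 1) (hk2 : k11 + k10 = 1) :
    -(∫ v : ℝ, (v / 2) * ((h t 1 v) ^ 2 - (h t 0 v) ^ 2))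
      ≤ -2 * k00 * (1 - k00) * Abd h t - 2 * k11 * (1 - k11) * Bbd h t
        + 2 * |k11 * (1 - k00) + k00 * (1 - k11)| * Real.sqrt (Abd h t * Bbd h t) := by
  have hk01 : k01 = 1 - k00 := by linarith
  have hk10 : k10 = 1 - k11 := by linarith
  subst hk01 hk10
  -- integrability of negated-argument versions
  have hemb : MeasurableEmbedding (Neg.neg : ℝ → ℝ) :=
    (Homeomorph.neg ℝ).measurableEmbedding
  have hneg0 : Integrable (fun v : ℝ => |v| * (h t 0 (-v)) ^ 2) := by
    have := ((Measure.measurePreserving_neg (volume : Measure ℝ)).integrable_comp_emb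
      hemb (g := fun v : ℝ => |v| * (h t 0 v) ^ 2)).mpr hint0
    simpa [Function.comp_def, abs_neg] using this
  have hneg1 : Integrable (fun v : ℝ => |v| * (h t 1 (-v)) ^ 2) := by
    have := ((Measure.measurePreserving_neg (volume : Measure ℝ)).integrable_comp_emb
      hemb (g := fun v : ℝ => |v| * (h t 1 v) ^ 2)).mpr hint1
    simpa [Function.comp_def, abs_neg] using this
  have IF : Integrable (fun v : ℝ => v / 2 * (h t 0 v) ^ 2) := stmt17_aux_int _ hint0
  have IG : Integrable (fun v : ℝ => v / 2 * (h t 1 v) ^ 2) := stmt17_aux_int _ hint1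
  have IA : Integrable (fun v : ℝ => v / 2 * (h t 0 (-v)) ^ 2) := stmt17_aux_int _ hneg0
  have IGn : Integrable (fun v : ℝ => v / 2 * (h t 1 (-v)) ^ 2) := stmt17_aux_int _ hneg1
  have Itot : Integrable (fun v : ℝ => v / 2 * ((h t 1 v) ^ 2 - (h t 0 v) ^ 2)) := by
    have := IG.sub IF
    simpa [Pi.sub_def, mul_sub] using this
  -- value identities
  have eqA : Abd h t = ∫ v in Ioi (0:ℝ), v / 2 * (h t 0 (-v)) ^ 2 := by
    unfold Abd
    rw [stmt17_aux_flip (h t 0), neg_neg]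
  have eqB : Bbd h t = ∫ v in Ioi (0:ℝ), v / 2 * (h t 1 v) ^ 2 := rfl
  have eqQ : (∫ v in Iio (0:ℝ), v / 2 * (h t 1 v) ^ 2)
      = -∫ v in Ioi (0:ℝ), v / 2 * (h t 1 (-v)) ^ 2 := stmt17_aux_flip (h t 1)
  have hA0 : 0 ≤ Abd h t := by
    rw [eqA]
    exact setIntegral_nonneg measurableSet_Ioi fun v hv =>
      mul_nonneg (by have : (0:ℝ) < v := hv; linarith) (sq_nonneg _)
  have hB0 : 0 ≤ Bbd h t := by
    rw [eqB]
    exact setIntegral_nonneg measurableSet_Ioi fun v hv =>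
      mul_nonneg (by have : (0:ℝ) < v := hv; linarith) (sq_nonneg _)
  -- boundary conditions on Ioi 0
  have hbc : ∀ v ∈ Ioi (0:ℝ),
      h t 0 v = k00 * h t 0 (-v) + (1 - k11) * h t 1 v ∧
      h t 1 (-v) = (1 - k00) * h t 0 (-v) + k11 * h t 1 v := by
    intro v hv
    have hv' : (0:ℝ) < v := hv
    refine ⟨hbc0 v hv', ?_⟩
    have := hbc1 (-v) (by linarith)
    simpa [neg_neg] using this
  -- split of the full integral
  have hsplit : (∫ v : ℝ, v / 2 * ((h t 1 v) ^ 2 - (h t 0 v) ^ 2))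
      = (∫ v in Iio (0:ℝ), v / 2 * ((h t 1 v) ^ 2 - (h t 0 v) ^ 2))
        + ∫ v in Ioi (0:ℝ), v / 2 * ((h t 1 v) ^ 2 - (h t 0 v) ^ 2) := by
    have h1 := intervalIntegral.integral_Iic_add_Ioi (b := (0:ℝ)) (μ := volume)
      Itot.integrableOn Itot.integrableOn
    rw [← h1]
    congr 1
    exact setIntegral_congr_set Iio_ae_eq_Iic.symm
  have hIio : (∫ v in Iio (0:ℝ), v / 2 * ((h t 1 v) ^ 2 - (h t 0 v) ^ 2))
      = (-∫ v in Ioi (0:ℝ), v / 2 * (h t 1 (-v)) ^ 2) + Abd h t := by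
    have e1 : (∫ v in Iio (0:ℝ), v / 2 * ((h t 1 v) ^ 2 - (h t 0 v) ^ 2))
        = (∫ v in Iio (0:ℝ), v / 2 * (h t 1 v) ^ 2)
          - ∫ v in Iio (0:ℝ), v / 2 * (h t 0 v) ^ 2 := by
      rw [← integral_sub IG.integrableOn IF.integrableOn]
      exact setIntegral_congr_fun measurableSet_Iio fun v _ => by ring
    have e2 : (∫ v in Iio (0:ℝ), v / 2 * (h t 0 v) ^ 2) = -Abd h t := by
      unfold Abd; ring
    rw [e1, e2, eqQ]; ring
  have hIoi : (∫ v in Ioi (0:ℝ), v / 2 * ((h t 1 v) ^ 2 - (h t 0 v) ^ 2))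
      = Bbd h t - ∫ v in Ioi (0:ℝ), v / 2 * (h t 0 v) ^ 2 := by
    rw [eqB, ← integral_sub IG.integrableOn IF.integrableOn]
    exact setIntegral_congr_fun measurableSet_Ioi fun v _ => by ring
  by_cases hq : k11 * (1 - k00) + k00 * (1 - k11) = 0
  · -- degenerate case: no cross term
    have hsum : (∫ v in Ioi (0:ℝ), v / 2 * (h t 0 v) ^ 2)
        + (∫ v in Ioi (0:ℝ), v / 2 * (h t 1 (-v)) ^ 2)
        = (k00 ^ 2 + (1 - k00) ^ 2) * Abd h t
          + ((1 - k11) ^ 2 + k11 ^ 2) * Bbd h t := by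
      rw [eqA, eqB, ← integral_const_mul, ← integral_const_mul,
        ← integral_add IF.integrableOn IGn.integrableOn,
        ← integral_add (IA.integrableOn.const_mul _) (IG.integrableOn.const_mul _)]
      refine setIntegral_congr_fun measurableSet_Ioi fun v hv => ?_
      obtain ⟨e0, e1⟩ := hbc v hv
      rw [e0, e1]
      linear_combination (v * h t 0 (-v) * h t 1 v) * hq
    have hfinal : -(∫ v : ℝ, v / 2 * ((h t 1 v) ^ 2 - (h t 0 v) ^ 2))
        = -2 * k00 * (1 - k00) * Abd h t - 2 * k11 * (1 - k11) * Bbd h t := by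
      rw [hsplit, hIio, hIoi]
      linear_combination hsum
    rw [hfinal, hq, abs_zero]
    have hs : 0 ≤ Real.sqrt (Abd h t * Bbd h t) := Real.sqrt_nonneg _
    linarith
  · -- nondegenerate case
    have hq2 : (2 : ℝ) * (k11 * (1 - k00) + k00 * (1 - k11)) ≠ 0 :=
      mul_ne_zero two_ne_zero hq
    -- integrability of the cross term on Ioi 0
    have Iab : IntegrableOn (fun v : ℝ => v / 2 * (h t 0 (-v) * h t 1 v)) (Ioi 0) := by
      have hcomb : IntegrableOn (fun v : ℝ =>
          (v / 2 * (h t 0 v) ^ 2 + v / 2 * (h t 1 (-v)) ^ 2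
            - (k00 ^ 2 + (1 - k00) ^ 2) * (v / 2 * (h t 0 (-v)) ^ 2)
            - ((1 - k11) ^ 2 + k11 ^ 2) * (v / 2 * (h t 1 v) ^ 2))
            / (2 * (k11 * (1 - k00) + k00 * (1 - k11)))) (Ioi 0) :=
        (((IF.integrableOn.add IGn.integrableOn).sub (IA.integrableOn.const_mul _)).sub
          (IG.integrableOn.const_mul _)).div_const _
      refine hcomb.congr ?_
      filter_upwards [ae_restrict_mem measurableSet_Ioi] with v hv
      obtain ⟨e0, e1⟩ := hbc v hv
      rw [e0, e1, div_eq_iff hq2]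
      ring
    have hsum : (∫ v in Ioi (0:ℝ), v / 2 * (h t 0 v) ^ 2)
        + (∫ v in Ioi (0:ℝ), v / 2 * (h t 1 (-v)) ^ 2)
        = (k00 ^ 2 + (1 - k00) ^ 2) * Abd h t
          + ((1 - k11) ^ 2 + k11 ^ 2) * Bbd h t
          + 2 * (k11 * (1 - k00) + k00 * (1 - k11))
            * ∫ v in Ioi (0:ℝ), v / 2 * (h t 0 (-v) * h t 1 v) := by
      have K2 : Integrable (fun v : ℝ =>
          (k00 ^ 2 + (1 - k00) ^ 2) * (v / 2 * (h t 0 (-v)) ^ 2)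
            + ((1 - k11) ^ 2 + k11 ^ 2) * (v / 2 * (h t 1 v) ^ 2))
          (volume.restrict (Ioi 0)) :=
        (IA.integrableOn.const_mul _).add (IG.integrableOn.const_mul _)
      rw [eqA, eqB, ← integral_const_mul, ← integral_const_mul, ← integral_const_mul,
        ← integral_add IF.integrableOn IGn.integrableOn,
        ← integral_add (IA.integrableOn.const_mul _) (IG.integrableOn.const_mul _),
        ← integral_add K2 (Iab.const_mul _)]
      refine setIntegral_congr_fun measurableSet_Ioi fun v hv => ?_
      obtain ⟨e0, e1⟩ := hbc v hv
      rw [e0, e1]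
      ring
    -- Cauchy-Schwarz via the discriminant
    have hCS : |∫ v in Ioi (0:ℝ), v / 2 * (h t 0 (-v) * h t 1 v)|
        ≤ Real.sqrt (Abd h t * Bbd h t) := by
      set D := ∫ v in Ioi (0:ℝ), v / 2 * (h t 0 (-v) * h t 1 v) with hD
      have key : ∀ θ : ℝ, 0 ≤ Abd h t * (θ * θ) + (2 * D) * θ + Bbd h t := by
        intro θ
        have e : (∫ v in Ioi (0:ℝ), v / 2 * (θ * h t 0 (-v) + h t 1 v) ^ 2)
            = θ * θ * (∫ v in Ioi (0:ℝ), v / 2 * (h t 0 (-v)) ^ 2)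
              + ((2 * θ) * (∫ v in Ioi (0:ℝ), v / 2 * (h t 0 (-v) * h t 1 v))
                + ∫ v in Ioi (0:ℝ), v / 2 * (h t 1 v) ^ 2) := by
          have K3 : Integrable (fun v : ℝ =>
              2 * θ * (v / 2 * (h t 0 (-v) * h t 1 v)) + v / 2 * (h t 1 v) ^ 2)
              (volume.restrict (Ioi 0)) := (Iab.const_mul _).add IG.integrableOn
          rw [← integral_const_mul, ← integral_const_mul,
            ← integral_add (Iab.const_mul _) IG.integrableOn,
            ← integral_add (IA.integrableOn.const_mul _) K3]
          exact setIntegral_congr_fun measurableSet_Ioi fun v _ => by ring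
        have pos : 0 ≤ ∫ v in Ioi (0:ℝ), v / 2 * (θ * h t 0 (-v) + h t 1 v) ^ 2 :=
          setIntegral_nonneg measurableSet_Ioi fun v hv =>
            mul_nonneg (by have : (0:ℝ) < v := hv; linarith) (sq_nonneg _)
        rw [e, ← eqA, ← eqB, ← hD] at pos
        nlinarith [pos]
      have hdisc := discrim_le_zero key
      rw [discrim] at hdisc
      have hD2 : D ^ 2 ≤ Abd h t * Bbd h t := by nlinarith [hdisc]
      calc |D| = Real.sqrt (D ^ 2) := (Real.sqrt_sq_eq_abs D).symm
        _ ≤ Real.sqrt (Abd h t * Bbd h t) := Real.sqrt_le_sqrt hD2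
    have hfinal : -(∫ v : ℝ, v / 2 * ((h t 1 v) ^ 2 - (h t 0 v) ^ 2))
        = -2 * k00 * (1 - k00) * Abd h t - 2 * k11 * (1 - k11) * Bbd h t
          + 2 * (k11 * (1 - k00) + k00 * (1 - k11))
            * ∫ v in Ioi (0:ℝ), v / 2 * (h t 0 (-v) * h t 1 v) := by
      rw [hsplit, hIio, hIoi]
      linear_combination hsum
    rw [hfinal]
    have h1 : (k11 * (1 - k00) + k00 * (1 - k11))
          * ∫ v in Ioi (0:ℝ), v / 2 * (h t 0 (-v) * h t 1 v)
        ≤ |k11 * (1 - k00) + k00 * (1 - k11)| * Real.sqrt (Abd h t * Bbd h t) := by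
      calc (k11 * (1 - k00) + k00 * (1 - k11))
            * ∫ v in Ioi (0:ℝ), v / 2 * (h t 0 (-v) * h t 1 v)
          ≤ |(k11 * (1 - k00) + k00 * (1 - k11))
            * ∫ v in Ioi (0:ℝ), v / 2 * (h t 0 (-v) * h t 1 v)| := le_abs_self _
        _ = |k11 * (1 - k00) + k00 * (1 - k11)|
            * |∫ v in Ioi (0:ℝ), v / 2 * (h t 0 (-v) * h t 1 v)| := abs_mul _ _
        _ ≤ |k11 * (1 - k00) + k00 * (1 - k11)| * Real.sqrt (Abd h t * Bbd h t) :=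
            mul_le_mul_of_nonneg_left hCS (abs_nonneg _)
    linarith
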